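/- Let λ > 0, p ∈ ℕ, N ∈ ℕ, and let y₁, …, y_{2p+2} ∈ T² be points such that |y_{2p+2} − y_{2p+1}| ≤ |y_j − y_k| for every even index j and odd index k with 1 ≤ j, k ≤ 2p+2. Then ∏_{j=1}^{p} [ (|y_{2j−1} − y_{2p+1}| + N^{−1})/(|y_{2j−1} − y_{2p+2}| + N^{−1}) ]^{λ} · [ (|y_{2j} − y_{2p+2}| + N^{−1})/(|y_{2j} − y_{2p+1}| + N^{−1}) ]^{λ} ≤ 4^{pλ}. -/
import Mathlib
open scoped Real
open scoped Real

noncomputable def enorm2 (x : ℝ × ℝ) : ℝ := Real.sqrt (x.1 ^ 2 + x.2 ^ 2)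
noncomputable def torusNorm2 (x : ℝ × ℝ) : ℝ :=
  ⨅ m : ℤ × ℤ, enorm2 (x.1 - 2 * π * (m.1 : ℝ), x.2 - 2 * π * (m.2 : ℝ))
noncomputable def torusDist2 (x y : ℝ × ℝ) : ℝ := torusNorm2 (x.1 - y.1, x.2 - y.2)

lemma enorm2_nonneg (x : ℝ × ℝ) : 0 ≤ enorm2 x := Real.sqrt_nonneg _

lemma enorm2_triangle (a b : ℝ × ℝ) :
    enorm2 (a.1 + b.1, a.2 + b.2) ≤ enorm2 a + enorm2 b := by
  obtain ⟨a1, a2⟩ := a; obtain ⟨b1, b2⟩ := b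
  simp only [enorm2]
  set A := a1 ^ 2 + a2 ^ 2 with hA
  set B := b1 ^ 2 + b2 ^ 2 with hB
  have hA0 : 0 ≤ A := by positivity
  have hB0 : 0 ≤ B := by positivity
  have h2 : a1 * b1 + a2 * b2 ≤ Real.sqrt A * Real.sqrt B := by
    rw [← Real.sqrt_mul hA0]
    calc a1 * b1 + a2 * b2 ≤ |a1 * b1 + a2 * b2| := le_abs_self _
      _ = Real.sqrt ((a1 * b1 + a2 * b2) ^ 2) := by rw [Real.sqrt_sq_eq_abs]
      _ ≤ Real.sqrt (A * B) := by
          apply Real.sqrt_le_sqrt; nlinarith [sq_nonneg (a1 * b2 - a2 * b1)]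
  calc Real.sqrt ((a1 + b1) ^ 2 + (a2 + b2) ^ 2)
      ≤ Real.sqrt ((Real.sqrt A + Real.sqrt B) ^ 2) := by
        apply Real.sqrt_le_sqrt
        have := Real.sq_sqrt hA0
        have := Real.sq_sqrt hB0
        nlinarith
    _ = Real.sqrt A + Real.sqrt B := Real.sqrt_sq (by positivity)

lemma torusNorm2_bdd (x : ℝ × ℝ) :
    BddBelow (Set.range fun m : ℤ × ℤ =>
      enorm2 (x.1 - 2 * π * (m.1 : ℝ), x.2 - 2 * π * (m.2 : ℝ))) :=
  ⟨0, by rintro _ ⟨m, rfl⟩; exact enorm2_nonneg _⟩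

lemma torusNorm2_nonneg (x : ℝ × ℝ) : 0 ≤ torusNorm2 x :=
  le_ciInf fun _ => enorm2_nonneg _

lemma torusDist2_nonneg (x y : ℝ × ℝ) : 0 ≤ torusDist2 x y := torusNorm2_nonneg _

lemma torusNorm2_neg (x : ℝ × ℝ) : torusNorm2 (-x.1, -x.2) = torusNorm2 x := by
  unfold torusNorm2
  rw [iInf, iInf]
  congr 1
  ext r
  constructor
  · rintro ⟨m, rfl⟩
    refine ⟨(-m.1, -m.2), ?_⟩
    simp only [enorm2]
    push_cast
    ring_nf
  · rintro ⟨m, rfl⟩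
    refine ⟨(-m.1, -m.2), ?_⟩
    simp only [enorm2]
    push_cast
    ring_nf

lemma torusDist2_comm (x y : ℝ × ℝ) : torusDist2 x y = torusDist2 y x := by
  unfold torusDist2
  rw [← torusNorm2_neg (y.1 - x.1, y.2 - x.2)]
  simp only [neg_sub]

lemma torusNorm2_add (a b : ℝ × ℝ) :
    torusNorm2 (a.1 + b.1, a.2 + b.2) ≤ torusNorm2 a + torusNorm2 b := by
  have key : ∀ m n : ℤ × ℤ,
      torusNorm2 (a.1 + b.1, a.2 + b.2) ≤
        enorm2 (a.1 - 2 * π * (m.1 : ℝ), a.2 - 2 * π * (m.2 : ℝ)) +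
        enorm2 (b.1 - 2 * π * (n.1 : ℝ), b.2 - 2 * π * (n.2 : ℝ)) := by
    intro m n
    refine le_trans (ciInf_le (torusNorm2_bdd _) (m.1 + n.1, m.2 + n.2)) ?_
    have h := enorm2_triangle (a.1 - 2 * π * (m.1 : ℝ), a.2 - 2 * π * (m.2 : ℝ))
      (b.1 - 2 * π * (n.1 : ℝ), b.2 - 2 * π * (n.2 : ℝ))
    refine le_trans (le_of_eq ?_) h
    simp only [enorm2]
    push_cast
    ring_nf
  rw [← sub_le_iff_le_add]
  refine le_ciInf fun m => ?_
  rw [sub_le_comm]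
  refine le_ciInf fun n => ?_
  rw [sub_le_iff_le_add]
  exact (key m n).trans (le_of_eq (add_comm _ _))

lemma torusDist2_triangle (x y z : ℝ × ℝ) :
    torusDist2 x z ≤ torusDist2 x y + torusDist2 y z := by
  have := torusNorm2_add (x.1 - y.1, x.2 - y.2) (y.1 - z.1, y.2 - z.2)
  simpa [torusDist2, sub_add_sub_cancel] using this

/-- dipole cancellation, (2.20)–(2.22): let `λ > 0`, `p, N ∈ ℕ` with
`N ≥ 1`, and let `y₁, …, y_{2p+2} ∈ T²` (here `i : Fin (2p+2)` is the point `y_{i+1}`,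
so even paper-indices correspond to `(i : ℕ) % 2 = 1`) be such that
`|y_{2p+2} − y_{2p+1}| ≤ |y_j − y_k|` for every even `j` and odd `k`. Then
`∏_{j=1}^p [(|y_{2j−1} − y_{2p+1}| + N⁻¹)/(|y_{2j−1} − y_{2p+2}| + N⁻¹)]^λ ·
           [(|y_{2j} − y_{2p+2}| + N⁻¹)/(|y_{2j} − y_{2p+1}| + N⁻¹)]^λ ≤ 4^{pλ}`. -/
theorem dipole_cancellation_estimate (lam : ℝ) (hlam : 0 < lam) (p N : ℕ) (hN : 1 ≤ N)
    (y : Fin (2 * p + 2) → ℝ × ℝ)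
    (hmin : ∀ j k : Fin (2 * p + 2), (j : ℕ) % 2 = 1 → (k : ℕ) % 2 = 0 →
      torusDist2 (y ⟨2 * p + 1, by omega⟩) (y ⟨2 * p, by omega⟩) ≤ torusDist2 (y j) (y k)) :
    (∏ j : Fin p,
        ((torusDist2 (y ⟨2 * (j : ℕ), by have := j.isLt; omega⟩) (y ⟨2 * p, by omega⟩)
            + (N : ℝ)⁻¹) /
          (torusDist2 (y ⟨2 * (j : ℕ), by have := j.isLt; omega⟩) (y ⟨2 * p + 1, by omega⟩)
            + (N : ℝ)⁻¹)) ^ lam *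
        ((torusDist2 (y ⟨2 * (j : ℕ) + 1, by have := j.isLt; omega⟩) (y ⟨2 * p + 1, by omega⟩)
            + (N : ℝ)⁻¹) /
          (torusDist2 (y ⟨2 * (j : ℕ) + 1, by have := j.isLt; omega⟩) (y ⟨2 * p, by omega⟩)
            + (N : ℝ)⁻¹)) ^ lam)
      ≤ (4 : ℝ) ^ ((p : ℝ) * lam) := by
  have hε : (0 : ℝ) < (N : ℝ)⁻¹ := by
    have : (0 : ℝ) < (N : ℝ) := by exact_mod_cast hN
    positivity
  set ε := (N : ℝ)⁻¹ with hεdef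
  set u : ℝ × ℝ := y ⟨2 * p, by omega⟩ with hu
  set v : ℝ × ℝ := y ⟨2 * p + 1, by omega⟩ with hv
  set δ := torusDist2 v u with hδ
  -- each factor is at most 4^lam
  have hfac : ∀ j : Fin p,
      ((torusDist2 (y ⟨2 * (j : ℕ), by have := j.isLt; omega⟩) u + ε) /
        (torusDist2 (y ⟨2 * (j : ℕ), by have := j.isLt; omega⟩) v + ε)) ^ lam *
      ((torusDist2 (y ⟨2 * (j : ℕ) + 1, by have := j.isLt; omega⟩) v + ε) /
        (torusDist2 (y ⟨2 * (j : ℕ) + 1, by have := j.isLt; omega⟩) u + ε)) ^ lam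
      ≤ (4 : ℝ) ^ lam := by
    intro j
    have hjlt := j.isLt
    set a : ℝ × ℝ := y ⟨2 * (j : ℕ), by omega⟩ with ha
    set b : ℝ × ℝ := y ⟨2 * (j : ℕ) + 1, by omega⟩ with hb
    have h1 : δ ≤ torusDist2 a v := by
      rw [torusDist2_comm]
      exact hmin ⟨2 * p + 1, by omega⟩ ⟨2 * (j : ℕ), by omega⟩ (by simp [Nat.mul_add_mod]) (by simp [Nat.mul_mod_right])
    have h2 : δ ≤ torusDist2 b u := by
      exact hmin ⟨2 * (j : ℕ) + 1, by omega⟩ ⟨2 * p, by omega⟩ (by simp [Nat.mul_add_mod]) (by simp [Nat.mul_mod_right])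
    have hda : 0 ≤ torusDist2 a v := torusDist2_nonneg _ _
    have hdb : 0 ≤ torusDist2 b u := torusDist2_nonneg _ _
    have hr1 : (torusDist2 a u + ε) / (torusDist2 a v + ε) ≤ 2 := by
      rw [div_le_iff₀ (by linarith)]
      have htr : torusDist2 a u ≤ torusDist2 a v + δ := by
        have := torusDist2_triangle a v u
        linarith [this]
      linarith
    have hr2 : (torusDist2 b v + ε) / (torusDist2 b u + ε) ≤ 2 := by
      rw [div_le_iff₀ (by linarith)]
      have htr : torusDist2 b v ≤ torusDist2 b u + δ := by
        have := torusDist2_triangle b u v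
        have hc : torusDist2 u v = δ := torusDist2_comm u v ▸ rfl
        rw [torusDist2_comm u v] at this
        linarith
      linarith
    have hr1n : 0 ≤ (torusDist2 a u + ε) / (torusDist2 a v + ε) :=
      div_nonneg (by linarith [torusDist2_nonneg a u]) (by linarith)
    have hr2n : 0 ≤ (torusDist2 b v + ε) / (torusDist2 b u + ε) :=
      div_nonneg (by linarith [torusDist2_nonneg b v]) (by linarith)
    calc _ ≤ (2 : ℝ) ^ lam * (2 : ℝ) ^ lam := by
          apply mul_le_mul (Real.rpow_le_rpow hr1n hr1 hlam.le)
            (Real.rpow_le_rpow hr2n hr2 hlam.le)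
            (Real.rpow_nonneg hr2n lam) (Real.rpow_nonneg (by norm_num) lam)
      _ = (4 : ℝ) ^ lam := by
          rw [← Real.mul_rpow (by norm_num) (by norm_num)]
          norm_num
  calc (∏ j : Fin p, _) ≤ ∏ _j : Fin p, (4 : ℝ) ^ lam := by
        apply Finset.prod_le_prod
        · intro j _
          exact mul_nonneg (Real.rpow_nonneg (div_nonneg
              (by linarith [torusDist2_nonneg (y ⟨2 * (j : ℕ), by have := j.isLt; omega⟩) u])
              (by linarith [torusDist2_nonneg (y ⟨2 * (j : ℕ), by have := j.isLt; omega⟩) v])) _)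
            (Real.rpow_nonneg (div_nonneg
              (by linarith [torusDist2_nonneg (y ⟨2 * (j : ℕ) + 1, by have := j.isLt; omega⟩) v])
              (by linarith [torusDist2_nonneg (y ⟨2 * (j : ℕ) + 1, by have := j.isLt; omega⟩) u])) _)
        · intro j _
          exact hfac j
    _ = (4 : ℝ) ^ ((p : ℝ) * lam) := by
        rw [Finset.prod_const, Finset.card_univ, Fintype.card_fin,
          ← Real.rpow_natCast ((4:ℝ) ^ lam) p, ← Real.rpow_mul (by norm_num), mul_comm]
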